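/- The matrix D satisfies the identity D⁷ = D⁵ + D⁴. -/
import Mathlib


open Matrix

private def Dm : Matrix (Fin 7) (Fin 7) ℤ :=
  !![0,0,0,0,0,1,1;
     0,0,0,0,1,0,0;
     0,1,0,0,0,0,0;
     1,0,0,0,0,0,0;
     0,0,1,1,0,0,0;
     0,1,0,0,0,0,0;
     1,0,0,0,0,0,0]

private lemma p2 : Dm ^ 2 = !![1,1,0,0,0,0,0;
         0,0,1,1,0,0,0;
         0,0,0,0,1,0,0;
         0,0,0,0,0,1,1;
         1,1,0,0,0,0,0;
         0,0,0,0,1,0,0;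
         0,0,0,0,0,1,1] := by
  rw [pow_succ, pow_one, Dm]
  ext i j
  fin_cases i <;> fin_cases j <;> rfl

private lemma p3 : Dm ^ 3 = !![0,0,0,0,1,1,1;
         1,1,0,0,0,0,0;
         0,0,1,1,0,0,0;
         1,1,0,0,0,0,0;
         0,0,0,0,1,1,1;
         0,0,1,1,0,0,0;
         1,1,0,0,0,0,0] := by
  rw [pow_succ, p2, Dm]
  ext i j
  fin_cases i <;> fin_cases j <;> rfl

private lemma p4 : Dm ^ 4 = !![1,1,1,1,0,0,0;
         0,0,0,0,1,1,1;
         1,1,0,0,0,0,0;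
         0,0,0,0,1,1,1;
         1,1,1,1,0,0,0;
         1,1,0,0,0,0,0;
         0,0,0,0,1,1,1] := by
  rw [pow_succ, p3, Dm]
  ext i j
  fin_cases i <;> fin_cases j <;> rfl

private lemma p5 : Dm ^ 5 = !![1,1,0,0,1,1,1;
         1,1,1,1,0,0,0;
         0,0,0,0,1,1,1;
         1,1,1,1,0,0,0;
         1,1,0,0,1,1,1;
         0,0,0,0,1,1,1;
         1,1,1,1,0,0,0] := by
  rw [pow_succ, p4, Dm]
  ext i j
  fin_cases i <;> fin_cases j <;> rfl

private lemma p6 : Dm ^ 6 = !![1,1,1,1,1,1,1;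
         1,1,0,0,1,1,1;
         1,1,1,1,0,0,0;
         1,1,0,0,1,1,1;
         1,1,1,1,1,1,1;
         1,1,1,1,0,0,0;
         1,1,0,0,1,1,1] := by
  rw [pow_succ, p5, Dm]
  ext i j
  fin_cases i <;> fin_cases j <;> rfl

private lemma p7 : Dm ^ 7 = !![2,2,1,1,1,1,1;
         1,1,1,1,1,1,1;
         1,1,0,0,1,1,1;
         1,1,1,1,1,1,1;
         2,2,1,1,1,1,1;
         1,1,0,0,1,1,1;
         1,1,1,1,1,1,1] := by
  rw [pow_succ, p6, Dm]
  ext i j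
  fin_cases i <;> fin_cases j <;> rfl

theorem stmt_4 :
    let D : Matrix (Fin 7) (Fin 7) ℤ :=
      !![0,0,0,0,0,1,1;
         0,0,0,0,1,0,0;
         0,1,0,0,0,0,0;
         1,0,0,0,0,0,0;
         0,0,1,1,0,0,0;
         0,1,0,0,0,0,0;
         1,0,0,0,0,0,0]
    D ^ 7 = D ^ 5 + D ^ 4 := by
  intro D
  show Dm ^ 7 = Dm ^ 5 + Dm ^ 4
  rw [p7, p5, p4]
  ext i j
  fin_cases i <;> fin_cases j <;> rfl
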